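/- arXiv:2505.24353 — 4 statements merged into one kernel-verified Lean document; each statement's English description precedes it below -/
import Mathlib

section
/- For every nonzero Υ ∈ G_q one has exp₀(log₀(Υ)) = Υ, i.e. the Riemannian exponential map at the origin is a left inverse of the Riemannian logarithmic map at the origin. -/
/-- The inverse hyperbolic cosine, `arccosh x = log (x + √(x² − 1))`
(the inverse of `cosh` on `[0, ∞)` for `x ≥ 1`). -/
noncomputable def arccosh (x : ℝ) : ℝ :=
  Real.log (x + Real.sqrt (x ^ 2 - 1))

/-- The solvable group operation on `ℝ × ℝ^q`:
`Ψ * Υ = (Υ₁ + Ψ₁, Υ₂ + e^{−Υ₁}·Ψ₂)`. -/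
noncomputable def gmul {q : ℕ} (Ψ Υ : ℝ × EuclideanSpace ℝ (Fin q)) :
    ℝ × EuclideanSpace ℝ (Fin q) :=
  (Υ.1 + Ψ.1, Υ.2 + Real.exp (-Υ.1) • Ψ.2)

/-- The group inverse `Υ⁻¹ = (−Υ₁, −e^{Υ₁}·Υ₂)`. -/
noncomputable def ginv {q : ℕ} (Υ : ℝ × EuclideanSpace ℝ (Fin q)) :
    ℝ × EuclideanSpace ℝ (Fin q) :=
  (-Υ.1, -(Real.exp Υ.1 • Υ.2))

/-- The norm `N(Υ) = arccosh((e^{−Υ₁} + e^{Υ₁}(1 + ‖Υ₂‖²))/2)`. -/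
noncomputable def Nnorm {q : ℕ} (Υ : ℝ × EuclideanSpace ℝ (Fin q)) : ℝ :=
  arccosh ((Real.exp (-Υ.1) + Real.exp Υ.1 * (1 + ‖Υ.2‖ ^ 2)) / 2)

/-- The distance `d(Υ, Ψ) = N(Ψ⁻¹ * Υ)`. -/
noncomputable def gdist {q : ℕ} (Υ Ψ : ℝ × EuclideanSpace ℝ (Fin q)) : ℝ :=
  Nnorm (gmul (ginv Ψ) Υ)

/-- The Euclidean norm on `ℝ × ℝ^q`: `‖v‖ = (v₁² + ‖v₂‖²)^{1/2}`. -/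
noncomputable def nrm {q : ℕ} (v : ℝ × EuclideanSpace ℝ (Fin q)) : ℝ :=
  Real.sqrt (v.1 ^ 2 + ‖v.2‖ ^ 2)

/-- The Riemannian logarithmic map at the origin:
`log₀(Υ) = (N(Υ)/sinh N(Υ))·(cosh N(Υ) − e^{−Υ₁}, Υ₂)`. -/
noncomputable def log0 {q : ℕ} (Υ : ℝ × EuclideanSpace ℝ (Fin q)) :
    ℝ × EuclideanSpace ℝ (Fin q) :=
  (Nnorm Υ / Real.sinh (Nnorm Υ)) •
    ((Real.cosh (Nnorm Υ) - Real.exp (-Υ.1), Υ.2) : ℝ × EuclideanSpace ℝ (Fin q))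

/-- The Riemannian exponential map at the origin:
`exp₀(v) = (−log(cosh ‖v‖ − (v₁/‖v‖)·sinh ‖v‖), (v₂/‖v‖)·sinh ‖v‖)`. -/
noncomputable def exp0 {q : ℕ} (v : ℝ × EuclideanSpace ℝ (Fin q)) :
    ℝ × EuclideanSpace ℝ (Fin q) :=
  (-Real.log (Real.cosh (nrm v) - v.1 / nrm v * Real.sinh (nrm v)),
    (Real.sinh (nrm v) / nrm v) • v.2)

/-- For every nonzero `Υ ∈ G_q` one has `exp₀(log₀(Υ)) = Υ`: the Riemannian
exponential map at the origin is a left inverse of the Riemannian logarithmic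
map at the origin. -/
theorem stmt_13 (q : ℕ) (hq : 1 ≤ q)
    (Υ : ℝ × EuclideanSpace ℝ (Fin q)) (hΥ : Υ ≠ 0) :
    exp0 (log0 Υ) = Υ := by
  obtain ⟨a, w⟩ := Υ
  have hea : Real.exp a * Real.exp (-a) = 1 := by
    rw [← Real.exp_add]; simp
  set x : ℝ := (Real.exp (-a) + Real.exp a * (1 + ‖w‖ ^ 2)) / 2 with hxdef
  have hxcosh : x = Real.cosh a + Real.exp a * ‖w‖ ^ 2 / 2 := by
    rw [hxdef, Real.cosh_eq]; ring
  have hx1 : 1 < x := by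
    rcases eq_or_ne w 0 with hw | hw
    · have ha : a ≠ 0 := fun h => hΥ (by simp [h, hw, Prod.ext_iff])
      have h1 : 1 < Real.cosh a := by
        have := Real.cosh_pos a
        nlinarith [Real.one_lt_cosh.mpr ha]
      rw [hxcosh]
      have : ‖w‖ = 0 := by simp [hw]
      nlinarith [Real.exp_pos a]
    · have hw0 : 0 < ‖w‖ := norm_pos_iff.mpr hw
      have h1 : 1 ≤ Real.cosh a := Real.one_le_cosh a
      rw [hxcosh]
      nlinarith [Real.exp_pos a, mul_pos (Real.exp_pos a) (mul_pos hw0 hw0)]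
  set s : ℝ := Real.sqrt (x ^ 2 - 1) with hsdef
  have hx2 : (0:ℝ) ≤ x ^ 2 - 1 := by nlinarith
  have hs2 : s ^ 2 = x ^ 2 - 1 := Real.sq_sqrt hx2
  have hs0 : 0 < s := Real.sqrt_pos.mpr (by nlinarith)
  set N : ℝ := arccosh x with hNdef
  have hNlog : N = Real.log (x + s) := rfl
  have hy1 : 1 < x + s := by linarith
  have hN0 : 0 < N := by rw [hNlog]; exact Real.log_pos hy1
  have hexpN : Real.exp N = x + s := by rw [hNlog, Real.exp_log (by linarith)]
  have hexpnegN : Real.exp (-N) = x - s := by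
    rw [Real.exp_neg, hexpN]
    exact inv_eq_of_mul_eq_one_right (by nlinarith)
  have hcosh : Real.cosh N = x := by rw [Real.cosh_eq, hexpN, hexpnegN]; ring
  have hsinh : Real.sinh N = s := by rw [Real.sinh_eq, hexpN, hexpnegN]; ring
  have hNnorm : Nnorm ((a, w) : ℝ × EuclideanSpace ℝ (Fin q)) = N := rfl
  have key : (x - Real.exp (-a)) ^ 2 + ‖w‖ ^ 2 = s ^ 2 := by
    rw [hs2, hxdef]; nlinarith [hea]
  have hc0 : 0 < N / s := div_pos hN0 hs0
  set v : ℝ × EuclideanSpace ℝ (Fin q) :=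
    (N / s) • ((x - Real.exp (-a), w) : ℝ × EuclideanSpace ℝ (Fin q)) with hvdef
  have hlog : log0 ((a, w) : ℝ × EuclideanSpace ℝ (Fin q)) = v := by
    rw [hvdef]
    unfold log0
    rw [hNnorm, hcosh, hsinh]
  have hv1 : v.1 = (N / s) * (x - Real.exp (-a)) := rfl
  have hv2 : v.2 = (N / s) • w := rfl
  have hnrm : nrm v = N := by
    unfold nrm
    rw [hv1, hv2, norm_smul, Real.norm_eq_abs, abs_of_pos hc0, mul_pow, mul_pow,
      ← mul_add, key]
    rw [show (N / s) ^ 2 * s ^ 2 = N ^ 2 by field_simp]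
    exact Real.sqrt_sq hN0.le
  rw [hlog]
  unfold exp0
  rw [hnrm, hv1, hv2, hcosh, hsinh]
  have hfirst : x - N / s * (x - Real.exp (-a)) / N * s = Real.exp (-a) := by
    field_simp
    ring
  refine Prod.ext ?_ ?_
  · show -Real.log (x - N / s * (x - Real.exp (-a)) / N * s) = a
    rw [hfirst, Real.log_exp]; ring
  · show (s / N) • (N / s) • w = w
    rw [smul_smul, show s / N * (N / s) = 1 by field_simp, one_smul]
end

section
/- For every nonzero v = (v₁, v₂) ∈ ℝ × ℝ^q and every t ≥ 0, the point γ₀(v, t) satisfies N(γ₀(v, t)) = ‖v‖·t; in particular the curve t ↦ γ₀(v, t) is a constant-speed ray from the origin. -/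
/-- The geodesic ray from the origin with initial velocity `v`:
`γ₀(v, t) = (−log(cosh(‖v‖t) − (v₁/‖v‖)·sinh(‖v‖t)), (v₂/‖v‖)·sinh(‖v‖t))`. -/
noncomputable def geo {q : ℕ} (v : ℝ × EuclideanSpace ℝ (Fin q)) (t : ℝ) :
    ℝ × EuclideanSpace ℝ (Fin q) :=
  (-Real.log (Real.cosh (nrm v * t) - v.1 / nrm v * Real.sinh (nrm v * t)),
    (Real.sinh (nrm v * t) / nrm v) • v.2)

lemma arccosh_cosh {s : ℝ} (hs : 0 ≤ s) : arccosh (Real.cosh s) = s := by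
  unfold arccosh
  rw [show Real.cosh s ^ 2 - 1 = Real.sinh s ^ 2 by
        have := Real.cosh_sq s; nlinarith,
      Real.sqrt_sq (Real.sinh_nonneg_iff.mpr hs), Real.cosh_add_sinh, Real.log_exp]

theorem stmt_14' (q : ℕ) (hq : 1 ≤ q)
    (v : ℝ × EuclideanSpace ℝ (Fin q)) (hv : v ≠ 0) (t : ℝ) (ht : 0 ≤ t) :
    Nnorm (geo v t) = nrm v * t := by
  have hne : v.1 ≠ 0 ∨ v.2 ≠ 0 := by
    by_contra h; push_neg at h; exact hv (Prod.ext h.1 h.2)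
  have hsum : 0 < v.1 ^ 2 + ‖v.2‖ ^ 2 := by
    rcases hne with h | h
    · have : 0 < v.1 ^ 2 := by positivity
      nlinarith [sq_nonneg ‖v.2‖]
    · have : 0 < ‖v.2‖ := norm_pos_iff.mpr h
      nlinarith [sq_nonneg v.1]
  set r := nrm v with hrdef
  have hr : 0 < r := Real.sqrt_pos.mpr hsum
  have hr2 : r ^ 2 = v.1 ^ 2 + ‖v.2‖ ^ 2 := Real.sq_sqrt hsum.le
  set s := r * t with hsdef
  have hs : 0 ≤ s := mul_nonneg hr.le ht
  have hsh : 0 ≤ Real.sinh s := Real.sinh_nonneg_iff.mpr hs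
  have hv1 : |v.1| ≤ r := by
    rw [← Real.sqrt_sq_eq_abs]
    exact Real.sqrt_le_sqrt (by nlinarith [sq_nonneg ‖v.2‖])
  set D := Real.cosh s - v.1 / r * Real.sinh s with hDdef
  have hD : 0 < D := by
    have h1 : v.1 / r * Real.sinh s ≤ Real.sinh s := by
      have : v.1 / r ≤ 1 := by
        rw [div_le_one hr]; exact (abs_le.mp hv1).2
      nlinarith
    have := Real.sinh_lt_cosh s
    simp only [hDdef]
    nlinarith
  have hcosh : 0 < Real.cosh s := Real.cosh_pos s
  unfold Nnorm geo
  simp only [← hrdef, ← hsdef, ← hDdef, neg_neg, Real.exp_log hD, Real.exp_neg,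
    norm_smul, Real.norm_eq_abs, abs_div, abs_of_nonneg hsh, abs_of_pos hr]
  have hn2 : ‖v.2‖ ^ 2 = r ^ 2 - v.1 ^ 2 := by linarith
  have hD' : D = (Real.cosh s * r - v.1 * Real.sinh s) / r := by
    rw [hDdef]; field_simp
  have hD2 : (0:ℝ) < Real.cosh s * r - v.1 * Real.sinh s := by
    have h := hD; rw [hD'] at h
    exact (div_pos_iff.mp h).resolve_right (fun h' => absurd h'.2 (not_lt.mpr hr.le)) |>.1
  have key : (D + D⁻¹ * (1 + (Real.sinh s / r * ‖v.2‖) ^ 2)) / 2 = Real.cosh s := by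
    have hcsq := Real.cosh_sq s
    rw [hD', mul_pow, hn2]
    field_simp
    linear_combination (-(r ^ 2)) * hcsq
  rw [key, arccosh_cosh hs]

/-- For every nonzero `v ∈ ℝ × ℝ^q` and every `t ≥ 0`, the point `γ₀(v, t)`
satisfies `N(γ₀(v, t)) = ‖v‖·t`: the curve `t ↦ γ₀(v, t)` is a constant-speed
ray from the origin. -/
theorem stmt_14 (q : ℕ) (hq : 1 ≤ q)
    (v : ℝ × EuclideanSpace ℝ (Fin q)) (hv : v ≠ 0) (t : ℝ) (ht : 0 ≤ t) :
    Nnorm (geo v t) = nrm v * t :=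
  stmt_14' q hq v hv t ht
end

section
/- For every nonzero v = (v₁, v₂) ∈ ℝ × ℝ^q and all s, t ∈ ℝ one has d(γ₀(v, s), γ₀(v, t)) = ‖v‖·|t − s|; i.e. the curve t ↦ γ₀(v, t) is a globally distance-realizing geodesic of (G_q, d) through the origin. -/
set_option maxHeartbeats 1000000

lemma my_arccosh_cosh (x : ℝ) (hx : 0 ≤ x) : arccosh (Real.cosh x) = x := by
  unfold arccosh
  have h1 : Real.cosh x ^ 2 - 1 = Real.sinh x ^ 2 := by
    have := Real.cosh_sq x; linarith
  rw [h1, Real.sqrt_sq (Real.sinh_nonneg_iff.mpr hx), Real.cosh_add_sinh, Real.log_exp]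

lemma my_trig (b x y : ℝ) :
    (Real.cosh x - b * Real.sinh x) ^ 2 + (Real.cosh y - b * Real.sinh y) ^ 2
      + (Real.sinh x * Real.cosh y - Real.cosh x * Real.sinh y) ^ 2 * (1 - b ^ 2)
    = 2 * (Real.cosh x - b * Real.sinh x) * (Real.cosh y - b * Real.sinh y)
        * Real.cosh (x - y) := by
  rw [Real.cosh_sub]
  have h1 := Real.cosh_sq x
  have h2 := Real.cosh_sq y
  nlinarith [h1, h2, sq_nonneg b]

lemma my_key (b x y : ℝ)
    (hcx : 0 < Real.cosh x - b * Real.sinh x)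
    (hcy : 0 < Real.cosh y - b * Real.sinh y) :
    ((Real.cosh x - b * Real.sinh x) / (Real.cosh y - b * Real.sinh y)
      + (Real.cosh y - b * Real.sinh y) / (Real.cosh x - b * Real.sinh x)
        * (1 + (Real.sinh x - (Real.cosh x - b * Real.sinh x)
            * ((Real.cosh y - b * Real.sinh y)⁻¹ * Real.sinh y)) ^ 2 * (1 - b ^ 2))) / 2
    = Real.cosh (x - y) := by
  have h := my_trig b x y
  field_simp
  linear_combination h

/-- For every nonzero `v ∈ ℝ × ℝ^q` and all `s, t ∈ ℝ` one has
`d(γ₀(v, s), γ₀(v, t)) = ‖v‖·|t − s|`: the curve `t ↦ γ₀(v, t)` is a globally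
distance-realizing geodesic of `(G_q, d)` through the origin. -/
theorem stmt_15 (q : ℕ) (hq : 1 ≤ q)
    (v : ℝ × EuclideanSpace ℝ (Fin q)) (hv : v ≠ 0) (s t : ℝ) :
    gdist (geo v s) (geo v t) = nrm v * |t - s| := by
  have hne : v.1 ≠ 0 ∨ v.2 ≠ 0 := by
    by_contra h
    push_neg at h
    exact hv (Prod.ext h.1 h.2)
  have hpos : 0 < v.1 ^ 2 + ‖v.2‖ ^ 2 := by
    rcases hne with h | h
    · nlinarith [(pow_two_pos_of_ne_zero h : 0 < v.1 ^ 2), sq_nonneg ‖v.2‖]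
    · nlinarith [(pow_two_pos_of_ne_zero (norm_ne_zero_iff.mpr h) : 0 < ‖v.2‖ ^ 2), sq_nonneg v.1]
  have hr0 : 0 < nrm v := by unfold nrm; exact Real.sqrt_pos.mpr hpos
  have hr2 : nrm v ^ 2 = v.1 ^ 2 + ‖v.2‖ ^ 2 := by unfold nrm; exact Real.sq_sqrt hpos.le
  set r := nrm v with hrdef
  have ha2 : (v.1 / r) ^ 2 ≤ 1 := by
    rw [div_pow, div_le_one (by positivity)]
    nlinarith [sq_nonneg ‖v.2‖]
  have hc : ∀ x : ℝ, 0 < Real.cosh x - v.1 / r * Real.sinh x := by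
    intro x
    nlinarith [Real.cosh_sq x, Real.cosh_pos x, sq_nonneg (Real.sinh x),
      mul_nonneg (by linarith : (0:ℝ) ≤ 1 - (v.1 / r) ^ 2) (sq_nonneg (Real.sinh x))]
  have hcs := hc (r * s)
  have hct := hc (r * t)
  simp only [gdist, Nnorm, gmul, ginv, geo, ← hrdef]
  simp only [neg_neg]
  rw [show -(-Real.log (Real.cosh (r * s) - v.1 / r * Real.sinh (r * s))
        + Real.log (Real.cosh (r * t) - v.1 / r * Real.sinh (r * t)))
      = Real.log (Real.cosh (r * s) - v.1 / r * Real.sinh (r * s))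
        - Real.log (Real.cosh (r * t) - v.1 / r * Real.sinh (r * t)) from by ring,
    show -Real.log (Real.cosh (r * s) - v.1 / r * Real.sinh (r * s))
        + Real.log (Real.cosh (r * t) - v.1 / r * Real.sinh (r * t))
      = Real.log (Real.cosh (r * t) - v.1 / r * Real.sinh (r * t))
        - Real.log (Real.cosh (r * s) - v.1 / r * Real.sinh (r * s)) from by ring,
    Real.exp_sub, Real.exp_sub, Real.exp_neg, Real.exp_log hcs, Real.exp_log hct]
  rw [show (Real.sinh (r * s) / r) • v.2
        + (Real.cosh (r * s) - v.1 / r * Real.sinh (r * s))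
          • -((Real.cosh (r * t) - v.1 / r * Real.sinh (r * t))⁻¹
              • (Real.sinh (r * t) / r) • v.2)
      = (Real.sinh (r * s) / r - (Real.cosh (r * s) - v.1 / r * Real.sinh (r * s))
          * ((Real.cosh (r * t) - v.1 / r * Real.sinh (r * t))⁻¹
            * (Real.sinh (r * t) / r))) • v.2 from by module,
    norm_smul, Real.norm_eq_abs, mul_pow, sq_abs]
  have hn2 : ‖v.2‖ ^ 2 = r ^ 2 - v.1 ^ 2 := by linarith
  have hk : (Real.sinh (r * s) / r - (Real.cosh (r * s) - v.1 / r * Real.sinh (r * s))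
          * ((Real.cosh (r * t) - v.1 / r * Real.sinh (r * t))⁻¹
            * (Real.sinh (r * t) / r))) ^ 2 * ‖v.2‖ ^ 2
      = (Real.sinh (r * s) - (Real.cosh (r * s) - v.1 / r * Real.sinh (r * s))
          * ((Real.cosh (r * t) - v.1 / r * Real.sinh (r * t))⁻¹
            * Real.sinh (r * t))) ^ 2 * (1 - (v.1 / r) ^ 2) := by
    rw [show Real.sinh (r * s) / r - (Real.cosh (r * s) - v.1 / r * Real.sinh (r * s))
          * ((Real.cosh (r * t) - v.1 / r * Real.sinh (r * t))⁻¹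
            * (Real.sinh (r * t) / r))
        = (Real.sinh (r * s) - (Real.cosh (r * s) - v.1 / r * Real.sinh (r * s))
          * ((Real.cosh (r * t) - v.1 / r * Real.sinh (r * t))⁻¹
            * Real.sinh (r * t))) / r from by ring, div_pow, hn2]
    field_simp
  rw [hk, my_key (v.1 / r) (r * s) (r * t) hcs hct,
    ← Real.cosh_abs, my_arccosh_cosh _ (abs_nonneg _),
    show r * s - r * t = r * (s - t) from by ring, abs_mul, abs_of_pos hr0, abs_sub_comm]
end

section
/- Let H₀ = {Ψ ∈ G_q : Ψ_{2,q} = 0} be the fundamental hyperplane, where Ψ_{2,q} denotes the last paint coordinate. Then for every Υ ∈ G_q, the infimum of d(Υ, Ψ) over Ψ ∈ H₀ is attained and equals (1/2)·arccosh(1 + 2·Υ_{2,q}²). -/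
lemma arccosh_mono {a b : ℝ} (ha : 1 ≤ a) (hab : a ≤ b) : arccosh a ≤ arccosh b := by
  unfold arccosh
  have h1 : (0:ℝ) < a + Real.sqrt (a ^ 2 - 1) := by
    have := Real.sqrt_nonneg (a ^ 2 - 1); linarith
  apply Real.log_le_log h1
  have := Real.sqrt_le_sqrt (show a ^ 2 - 1 ≤ b ^ 2 - 1 by nlinarith)
  linarith

lemma arccosh_double {c : ℝ} (hc : 1 ≤ c) : arccosh (2 * c ^ 2 - 1) = 2 * arccosh c := by
  unfold arccosh
  have hc0 : (0:ℝ) ≤ c ^ 2 - 1 := by nlinarith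
  have h1 : Real.sqrt ((2 * c ^ 2 - 1) ^ 2 - 1) = 2 * c * Real.sqrt (c ^ 2 - 1) := by
    rw [show (2 * c ^ 2 - 1) ^ 2 - 1 = (2 * c) ^ 2 * (c ^ 2 - 1) by ring,
      Real.sqrt_mul (by positivity), Real.sqrt_sq (by linarith)]
  have hs := Real.sq_sqrt hc0
  have h2 : 2 * c ^ 2 - 1 + 2 * c * Real.sqrt (c ^ 2 - 1)
      = (c + Real.sqrt (c ^ 2 - 1)) ^ 2 := by nlinarith
  rw [h1, h2, Real.log_pow]
  norm_num

/-- The distance of a point `Υ` to the fundamental hyperplane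
`H₀ = {Ψ ∈ G_q : Ψ_{2,q} = 0}` is attained and equals
`(1/2)·arccosh(1 + 2·Υ_{2,q}²)`. -/
theorem stmt_18 (q : ℕ) (hq : 1 ≤ q) (Υ : ℝ × EuclideanSpace ℝ (Fin q)) :
    IsLeast (gdist Υ '' {Ψ : ℝ × EuclideanSpace ℝ (Fin q) | Ψ.2 ⟨q - 1, by omega⟩ = 0})
      ((1 / 2) * arccosh (1 + 2 * (Υ.2 ⟨q - 1, by omega⟩) ^ 2)) := by
  set idx : Fin q := ⟨q - 1, by omega⟩ with hidx
  set s : ℝ := Υ.2 idx with hsdef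
  set c : ℝ := Real.sqrt (1 + s ^ 2) with hcdef
  have hc2 : c ^ 2 = 1 + s ^ 2 := Real.sq_sqrt (by positivity)
  have hc1 : 1 ≤ c := by
    nlinarith [hc2, Real.sqrt_nonneg (1 + s ^ 2), sq_nonneg s]
  have hc0 : 0 < c := by linarith
  have hval : (1 / 2) * arccosh (1 + 2 * s ^ 2) = arccosh c := by
    rw [show (1:ℝ) + 2 * s ^ 2 = 2 * c ^ 2 - 1 by rw [hc2]; ring, arccosh_double hc1]
    ring
  rw [hval]
  constructor
  · -- membership: the minimizer
    refine ⟨(Υ.1 + Real.log c, c⁻¹ • (Υ.2 - s • EuclideanSpace.single idx 1)), ?_, ?_⟩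
    · simp only [Set.mem_setOf_eq, PiLp.smul_apply, PiLp.sub_apply,
        EuclideanSpace.single_apply, smul_eq_mul]
      simp [hsdef]
    · unfold gdist Nnorm gmul ginv
      have hexp : Real.exp (Υ.1 + Real.log c) = Real.exp Υ.1 * c := by
        rw [Real.exp_add, Real.exp_log hc0]
      have h2 : Υ.2 + Real.exp (-Υ.1) •
          (-(Real.exp (Υ.1 + Real.log c) • (c⁻¹ • (Υ.2 - s • EuclideanSpace.single idx 1))))
          = s • EuclideanSpace.single idx 1 := by
        rw [hexp, smul_neg, smul_smul, smul_smul]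
        rw [show Real.exp (-Υ.1) * (Real.exp Υ.1 * c) * c⁻¹
            = (Real.exp (-Υ.1) * Real.exp Υ.1) * (c * c⁻¹) by ring,
          ← Real.exp_add, mul_inv_cancel₀ (ne_of_gt hc0)]
        simp
      simp only [h2]
      have hn : ‖s • EuclideanSpace.single idx (1:ℝ)‖ ^ 2 = s ^ 2 := by
        rw [norm_smul, EuclideanSpace.norm_single]
        simp [sq_abs]
      rw [hn]
      have harg : (Real.exp (-(Υ.1 + -(Υ.1 + Real.log c))) +
          Real.exp (Υ.1 + -(Υ.1 + Real.log c)) * (1 + s ^ 2)) / 2 = c := by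
        have e1 : Υ.1 + -(Υ.1 + Real.log c) = -Real.log c := by ring
        rw [e1, neg_neg, Real.exp_log hc0, Real.exp_neg, Real.exp_log hc0, ← hc2]
        field_simp
        ring
      rw [harg]
  · -- lower bound
    rintro x ⟨Ψ, hΨ, rfl⟩
    unfold gdist Nnorm gmul ginv
    set v : EuclideanSpace ℝ (Fin q) :=
      Υ.2 + Real.exp (-Υ.1) • (-(Real.exp Ψ.1 • Ψ.2)) with hv
    have hvq : v idx = s := by
      simp only [hv, PiLp.add_apply, PiLp.smul_apply, PiLp.neg_apply, smul_eq_mul]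
      rw [Set.mem_setOf_eq] at hΨ
      rw [hΨ]
      ring
    have hvn : s ^ 2 ≤ ‖v‖ ^ 2 := by
      have h1 : |v idx| ≤ ‖v‖ := by
        rw [EuclideanSpace.norm_eq]
        have : |v idx| = Real.sqrt (|v idx| ^ 2) := by
          rw [Real.sqrt_sq (abs_nonneg _)]
        rw [this]
        apply Real.sqrt_le_sqrt
        exact Finset.single_le_sum (f := fun i => |v i| ^ 2)
          (fun i _ => by positivity) (Finset.mem_univ idx)
      calc s ^ 2 = |v idx| ^ 2 := by rw [hvq]; rw [sq_abs]
        _ ≤ ‖v‖ ^ 2 := by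
            apply pow_le_pow_left₀ (abs_nonneg _) h1
    apply arccosh_mono hc1
    set Δ : ℝ := Υ.1 + -Ψ.1 with hΔ
    have hAB : Real.exp (-Δ) * Real.exp Δ = 1 := by
      rw [← Real.exp_add]; simp
    have key : 2 * c ≤ Real.exp (-Δ) + Real.exp Δ * (1 + s ^ 2) := by
      have e1 : Real.exp (-Δ/2) * Real.exp (-Δ/2) = Real.exp (-Δ) := by
        rw [← Real.exp_add]; ring_nf
      have e2 : Real.exp (Δ/2) * Real.exp (Δ/2) = Real.exp Δ := by
        rw [← Real.exp_add]; ring_nf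
      have e3 : Real.exp (-Δ/2) * Real.exp (Δ/2) = 1 := by
        rw [← Real.exp_add]; ring_nf; exact Real.exp_zero
      nlinarith [sq_nonneg (Real.exp (-Δ/2) - Real.exp (Δ/2) * c)]
    have hBpos : 0 < Real.exp Δ := Real.exp_pos Δ
    have : Real.exp Δ * (1 + s ^ 2) ≤ Real.exp Δ * (1 + ‖v‖ ^ 2) := by
      apply mul_le_mul_of_nonneg_left (by linarith) (le_of_lt hBpos)
    linarith
end
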